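/- arXiv:2407.11411 — 2 statements merged into one kernel-verified Lean document; each statement's English description precedes it below -/
import Mathlib

section
/- Let r, s ≥ 3 be integers, both even. If the pair (Γ⁺(r,s), G⁺(r,s)) is basic of cycle type, then (r,s) = (4,4), (4,2p), or (2p,4) for some odd prime p. -/
open SimpleGraph

namespace OG4

variable {V : Type*} {W : Type*}

/-! ### Normal quotients, cycles, and basic pairs -/

/-- The setoid of orbits of a group `N` of permutations of `V`. -/
def orbitSetoid (N : Subgroup (Equiv.Perm V)) : Setoid V := MulAction.orbitRel N V

/-- The (normal) quotient graph of a graph `Γ` with respect to a group `N` of permutations: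
its vertices are the `N`-orbits, two distinct orbits being adjacent iff some vertex of one is
adjacent in `Γ` to some vertex of the other. -/
def quotientGraph (Γ : SimpleGraph V) (N : Subgroup (Equiv.Perm V)) :
    SimpleGraph (Quotient (orbitSetoid N)) :=
  SimpleGraph.fromRel fun a b =>
    ∃ x y : V, Quotient.mk (orbitSetoid N) x = a ∧ Quotient.mk (orbitSetoid N) y = b ∧ Γ.Adj x y

/-- `N` is a normal subgroup of the subgroup `G` (of some ambient group). -/
def NormalIn {G : Type*} [Group G] (N H : Subgroup G) : Prop :=
  N ≤ H ∧ ∀ h ∈ H, ∀ n ∈ N, h * n * h⁻¹ ∈ N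

/-- A graph is isomorphic to a cycle graph `C_m` for some `m ≥ 3`. -/
def IsoCycle (Δ : SimpleGraph W) : Prop :=
  ∃ m : ℕ, 3 ≤ m ∧ Nonempty (Δ ≃g SimpleGraph.cycleGraph m)

/-- Every normal quotient of `(Γ, G)` relative to a nontrivial normal subgroup is degenerate:
it has at most 2 vertices or is a cycle. -/
def IsBasic (Γ : SimpleGraph V) (G : Subgroup (Equiv.Perm V)) : Prop :=
  ∀ N : Subgroup (Equiv.Perm V), NormalIn N G → N ≠ ⊥ →
    Nat.card (Quotient (orbitSetoid N)) ≤ 2 ∨ IsoCycle (quotientGraph Γ N)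

/-- `(Γ, G)` is basic of cycle type. -/
def BasicOfCycleType (Γ : SimpleGraph V) (G : Subgroup (Equiv.Perm V)) : Prop :=
  IsBasic Γ G ∧
    ∃ N : Subgroup (Equiv.Perm V), NormalIn N G ∧ N ≠ ⊥ ∧ IsoCycle (quotientGraph Γ N)

/-- The kernel of the action of `G` on the set of `N`-orbits. -/
def orbitKernel (G N : Subgroup (Equiv.Perm V)) : Subgroup (Equiv.Perm V) where
  carrier := {g | g ∈ G ∧ ∀ x : V,
    Quotient.mk (orbitSetoid N) (g x) = Quotient.mk (orbitSetoid N) x}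
  one_mem' := ⟨G.one_mem, fun x => by simp⟩
  mul_mem' := by
    rintro a b ⟨haG, ha⟩ ⟨hbG, hb⟩
    refine ⟨G.mul_mem haG hbG, fun x => ?_⟩
    rw [Equiv.Perm.mul_apply, ha (b x), hb x]
  inv_mem' := by
    rintro a ⟨haG, ha⟩
    refine ⟨G.inv_mem haG, fun x => ?_⟩
    have h := ha (a⁻¹ x)
    rw [show a (a⁻¹ x) = x from Equiv.apply_symm_apply a x] at h
    exact h.symm

/-- `(Γ, G)` has a pair of independent cyclic normal quotients. -/
def HasIndepCyclicQuotients (Γ : SimpleGraph V) (G : Subgroup (Equiv.Perm V)) : Prop :=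
  ∃ N M : Subgroup (Equiv.Perm V), NormalIn N G ∧ NormalIn M G ∧
    IsoCycle (quotientGraph Γ N) ∧ IsoCycle (quotientGraph Γ M) ∧
    ¬ IsoCycle (quotientGraph Γ (orbitKernel G N ⊓ orbitKernel G M))

/-- `(Γ, G)` is basic of independent-cycle type. -/
def BasicOfIndependentCycleType (Γ : SimpleGraph V) (G : Subgroup (Equiv.Perm V)) : Prop :=
  IsBasic Γ G ∧ HasIndepCyclicQuotients Γ G

/-- Isomorphism of graph-group pairs: a graph isomorphism conjugating one group onto the other. -/
def PairIso (Γ : SimpleGraph V) (G : Subgroup (Equiv.Perm V))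
    (Δ : SimpleGraph W) (H : Subgroup (Equiv.Perm W)) : Prop :=
  ∃ e : Γ ≃g Δ, ∀ h : Equiv.Perm W, h ∈ H ↔ ∃ g ∈ G, e.toEquiv.permCongr g = h

/-! ### Minimal normal subgroups -/

/-- `M` is a minimal normal subgroup of the ambient group. -/
def IsMinimalNormal {G : Type*} [Group G] (M : Subgroup G) : Prop :=
  M.Normal ∧ M ≠ ⊥ ∧ ∀ N : Subgroup G, N.Normal → N ≤ M → N = ⊥ ∨ N = M

/-- `M` is a minimal normal subgroup of the subgroup `H`. -/
def IsMinimalNormalIn {G : Type*} [Group G] (M H : Subgroup G) : Prop :=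
  NormalIn M H ∧ M ≠ ⊥ ∧ ∀ N : Subgroup G, NormalIn N H → N ≤ M → N = ⊥ ∨ N = M

/-! ### The graphs `Γ(r,s)` and their automorphisms -/

/-- In `Γ(r,s)`, the vertex `(i,j)` is joined to the four vertices `(i ± 1, j ± 1)`. -/
def gammaRel (r s : ℕ) (x y : ZMod r × ZMod s) : Prop :=
  (y.1 = x.1 + 1 ∨ y.1 = x.1 - 1) ∧ (y.2 = x.2 + 1 ∨ y.2 = x.2 - 1)

/-- The graph `Γ(r,s)` on `ℤ_r × ℤ_s`. -/
def Gamma (r s : ℕ) : SimpleGraph (ZMod r × ZMod s) := SimpleGraph.fromRel (gammaRel r s)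

/-- `μ : (i,j) ↦ (i+1, j)`. -/
def mu (r s : ℕ) : Equiv.Perm (ZMod r × ZMod s) :=
  (Equiv.addRight (1 : ZMod r)).prodCongr (Equiv.refl (ZMod s))

/-- `ν : (i,j) ↦ (i, j+1)`. -/
def nu (r s : ℕ) : Equiv.Perm (ZMod r × ZMod s) :=
  (Equiv.refl (ZMod r)).prodCongr (Equiv.addRight (1 : ZMod s))

/-- `σ : (i,j) ↦ (-i, j)`. -/
def sigma (r s : ℕ) : Equiv.Perm (ZMod r × ZMod s) :=
  (Equiv.neg (ZMod r)).prodCongr (Equiv.refl (ZMod s))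

/-- `τ : (i,j) ↦ (-i, -j)`. -/
def tau (r s : ℕ) : Equiv.Perm (ZMod r × ZMod s) :=
  (Equiv.neg (ZMod r)).prodCongr (Equiv.neg (ZMod s))

/-- `σν : (i,j) ↦ (-i, j+1)`. -/
def sigmaNu (r s : ℕ) : Equiv.Perm (ZMod r × ZMod s) :=
  (Equiv.neg (ZMod r)).prodCongr (Equiv.addRight (1 : ZMod s))

/-- `μν : (i,j) ↦ (i+1, j+1)`. -/
def muNu (r s : ℕ) : Equiv.Perm (ZMod r × ZMod s) :=
  (Equiv.addRight (1 : ZMod r)).prodCongr (Equiv.addRight (1 : ZMod s))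

/-- `σμν : (i,j) ↦ (-(i+1), j+1)`. -/
def sigmaMuNu (r s : ℕ) : Equiv.Perm (ZMod r × ZMod s) :=
  ((Equiv.addRight (1 : ZMod r)).trans (Equiv.neg (ZMod r))).prodCongr
    (Equiv.addRight (1 : ZMod s))

/-- `μ² : (i,j) ↦ (i+2, j)`. -/
def muSq (r s : ℕ) : Equiv.Perm (ZMod r × ZMod s) :=
  (Equiv.addRight (2 : ZMod r)).prodCongr (Equiv.refl (ZMod s))

/-- `ν² : (i,j) ↦ (i, j+2)`. -/
def nuSq (r s : ℕ) : Equiv.Perm (ZMod r × ZMod s) :=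
  (Equiv.refl (ZMod r)).prodCongr (Equiv.addRight (2 : ZMod s))

/-- `μ^k : (i,j) ↦ (i+k, j)`. -/
def muPow (r s k : ℕ) : Equiv.Perm (ZMod r × ZMod s) :=
  (Equiv.addRight ((k : ZMod r))).prodCongr (Equiv.refl (ZMod s))

/-- `μ^k ν² : (i,j) ↦ (i+k, j+2)`. -/
def muPowNuSq (r s k : ℕ) : Equiv.Perm (ZMod r × ZMod s) :=
  (Equiv.addRight ((k : ZMod r))).prodCongr (Equiv.addRight (2 : ZMod s))

/-- `G(r,s) = ⟨μ, ν, σ⟩`. -/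
def Ggroup (r s : ℕ) : Subgroup (Equiv.Perm (ZMod r × ZMod s)) :=
  Subgroup.closure {mu r s, nu r s, sigma r s}

/-- `H(r,s) = ⟨μ, σν, τ⟩`. -/
def Hgroup (r s : ℕ) : Subgroup (Equiv.Perm (ZMod r × ZMod s)) :=
  Subgroup.closure {mu r s, sigmaNu r s, tau r s}

/-! ### The graphs `Γ⁺(r,s)` (for `r`, `s` even) -/

/-- `X⁺`: the set of `(i,j)` with `i` and `j` of the same parity. -/
def XPlus (r s : ℕ) : Set (ZMod r × ZMod s) := {x | x.1.val % 2 = x.2.val % 2}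

/-- `Γ⁺(r,s)`, the subgraph of `Γ(r,s)` induced on `X⁺`. -/
def GammaPlus (r s : ℕ) : SimpleGraph (XPlus r s) :=
  SimpleGraph.induce (XPlus r s) (Gamma r s)

section parity

lemma val_add_one_mod_two (r : ℕ) (hr : 2 ∣ r) (hr0 : r ≠ 0) (i : ZMod r) :
    (i + 1).val % 2 = (i.val + 1) % 2 := by
  haveI : NeZero r := ⟨hr0⟩
  haveI : Fact (1 < r) := ⟨by have := Nat.le_of_dvd (Nat.pos_of_ne_zero hr0) hr; omega⟩
  rw [ZMod.val_add, Nat.mod_mod_of_dvd _ hr, ZMod.val_one]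

lemma val_add_two_mod_two (r : ℕ) (hr : 2 ∣ r) (hr0 : r ≠ 0) (i : ZMod r) :
    (i + 2).val % 2 = i.val % 2 := by
  have h1 := val_add_one_mod_two r hr hr0 i
  have h2 := val_add_one_mod_two r hr hr0 (i + 1)
  rw [show i + 1 + 1 = i + 2 by ring] at h2
  omega

lemma val_neg_mod_two (r : ℕ) (hr : 2 ∣ r) (hr0 : r ≠ 0) (i : ZMod r) :
    (-i).val % 2 = i.val % 2 := by
  haveI : NeZero r := ⟨hr0⟩
  rcases eq_or_ne i 0 with h | h
  · simp [h]
  · have h1 : (-i).val = r - i.val := by rw [ZMod.neg_val]; simp [h]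
    have h2 : i.val < r := ZMod.val_lt i
    have h3 : i.val ≠ 0 := fun hh => h ((ZMod.val_eq_zero i).mp hh)
    obtain ⟨t, rfl⟩ := hr
    rw [h1]
    omega

end parity

section plusPerms

variable (r s : ℕ)

/-- The restriction of `μ²` to `X⁺`. -/
def muSqP (hr : 2 ∣ r) (hr0 : r ≠ 0) : Equiv.Perm (XPlus r s) :=
  (muSq r s).subtypePerm (by
    intro x
    have h := val_add_two_mod_two r hr hr0 x.1
    simp only [XPlus, Set.mem_setOf_eq, muSq, Equiv.prodCongr_apply, Prod.map,
      Equiv.coe_addRight, Equiv.refl_apply]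
    omega)

/-- The restriction of `ν²` to `X⁺`. -/
def nuSqP (hs : 2 ∣ s) (hs0 : s ≠ 0) : Equiv.Perm (XPlus r s) :=
  (nuSq r s).subtypePerm (by
    intro x
    have h := val_add_two_mod_two s hs hs0 x.2
    simp only [XPlus, Set.mem_setOf_eq, nuSq, Equiv.prodCongr_apply, Prod.map,
      Equiv.coe_addRight, Equiv.refl_apply]
    omega)

/-- The restriction of `μν` to `X⁺`. -/
def muNuP (hr : 2 ∣ r) (hr0 : r ≠ 0) (hs : 2 ∣ s) (hs0 : s ≠ 0) : Equiv.Perm (XPlus r s) :=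
  (muNu r s).subtypePerm (by
    intro x
    have h1 := val_add_one_mod_two r hr hr0 x.1
    have h2 := val_add_one_mod_two s hs hs0 x.2
    simp only [XPlus, Set.mem_setOf_eq, muNu, Equiv.prodCongr_apply, Prod.map,
      Equiv.coe_addRight]
    omega)

/-- The restriction of `σ` to `X⁺`. -/
def sigmaP (hr : 2 ∣ r) (hr0 : r ≠ 0) : Equiv.Perm (XPlus r s) :=
  (sigma r s).subtypePerm (by
    intro x
    have h := val_neg_mod_two r hr hr0 x.1
    simp only [XPlus, Set.mem_setOf_eq, sigma, Equiv.prodCongr_apply, Prod.map,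
      Equiv.neg_apply, Equiv.refl_apply]
    omega)

/-- The restriction of `τ` to `X⁺`. -/
def tauP (hr : 2 ∣ r) (hr0 : r ≠ 0) (hs : 2 ∣ s) (hs0 : s ≠ 0) : Equiv.Perm (XPlus r s) :=
  (tau r s).subtypePerm (by
    intro x
    have h1 := val_neg_mod_two r hr hr0 x.1
    have h2 := val_neg_mod_two s hs hs0 x.2
    simp only [XPlus, Set.mem_setOf_eq, tau, Equiv.prodCongr_apply, Prod.map,
      Equiv.neg_apply]
    omega)

/-- The restriction of `σμν` to `X⁺`. -/
def sigmaMuNuP (hr : 2 ∣ r) (hr0 : r ≠ 0) (hs : 2 ∣ s) (hs0 : s ≠ 0) :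
    Equiv.Perm (XPlus r s) :=
  (sigmaMuNu r s).subtypePerm (by
    intro x
    have h1 := val_neg_mod_two r hr hr0 (x.1 + 1)
    have h2 := val_add_one_mod_two r hr hr0 x.1
    have h3 := val_add_one_mod_two s hs hs0 x.2
    simp only [XPlus, Set.mem_setOf_eq, sigmaMuNu, Equiv.prodCongr_apply, Prod.map,
      Equiv.trans_apply, Equiv.coe_addRight, Equiv.neg_apply]
    omega)

/-- `G⁺(r,s) = ⟨μ², μν, σ⟩` acting on `X⁺`. -/
def GPlusGroup (hr : 2 ∣ r) (hr0 : r ≠ 0) (hs : 2 ∣ s) (hs0 : s ≠ 0) :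
    Subgroup (Equiv.Perm (XPlus r s)) :=
  Subgroup.closure {muSqP r s hr hr0, muNuP r s hr hr0 hs hs0, sigmaP r s hr hr0}

/-- `H⁺(r,s) = ⟨μ², σμν, τ⟩` acting on `X⁺`. -/
def HPlusGroup (hr : 2 ∣ r) (hr0 : r ≠ 0) (hs : 2 ∣ s) (hs0 : s ≠ 0) :
    Subgroup (Equiv.Perm (XPlus r s)) :=
  Subgroup.closure
    {muSqP r s hr hr0, sigmaMuNuP r s hr hr0 hs hs0, tauP r s hr hr0 hs hs0}

end plusPerms

/-! ### The standard double cover `Γ₂(r,s)` -/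

/-- Adjacency of the double cover: `(i,j)_δ ~ (i ± 1, j ± 1)_{δ+1}`. -/
def gamma2Rel (r s : ℕ) (x y : (ZMod r × ZMod s) × ZMod 2) : Prop :=
  (y.1.1 = x.1.1 + 1 ∨ y.1.1 = x.1.1 - 1) ∧ (y.1.2 = x.1.2 + 1 ∨ y.1.2 = x.1.2 - 1) ∧
    y.2 = x.2 + 1

/-- `Γ₂(r,s)`, the standard double cover of `Γ(r,s)`. -/
def Gamma2 (r s : ℕ) : SimpleGraph ((ZMod r × ZMod s) × ZMod 2) :=
  SimpleGraph.fromRel (gamma2Rel r s)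

/-- `μ : (i,j)_δ ↦ (i+1, j)_δ` on the double cover. -/
def muD (r s : ℕ) : Equiv.Perm ((ZMod r × ZMod s) × ZMod 2) :=
  (mu r s).prodCongr (Equiv.refl (ZMod 2))

/-- `ν : (i,j)_δ ↦ (i, j+1)_δ` on the double cover. -/
def nuD (r s : ℕ) : Equiv.Perm ((ZMod r × ZMod s) × ZMod 2) :=
  (nu r s).prodCongr (Equiv.refl (ZMod 2))

/-- `σ : (i,j)_δ ↦ (i, -j)_{δ+1}` on the double cover. -/
def sigmaD (r s : ℕ) : Equiv.Perm ((ZMod r × ZMod s) × ZMod 2) :=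
  ((Equiv.refl (ZMod r)).prodCongr (Equiv.neg (ZMod s))).prodCongr
    (Equiv.addRight (1 : ZMod 2))

/-- `τ : (i,j)_δ ↦ (-i, -j)_δ` on the double cover. -/
def tauD (r s : ℕ) : Equiv.Perm ((ZMod r × ZMod s) × ZMod 2) :=
  (tau r s).prodCongr (Equiv.refl (ZMod 2))

/-- `G₂(r,s) = ⟨μ, ν, σ, τ⟩` on the double cover. -/
def G2group (r s : ℕ) : Subgroup (Equiv.Perm ((ZMod r × ZMod s) × ZMod 2)) :=
  Subgroup.closure {muD r s, nuD r s, sigmaD r s, tauD r s}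




/-! ### Auxiliary translation permutations -/

lemma val_add_mod_two' (r : ℕ) (hr2 : 2 ∣ r) (hr0 : r ≠ 0) (i a : ZMod r) :
    (i + a).val % 2 = (i.val + a.val) % 2 := by
  haveI : NeZero r := ⟨hr0⟩
  rw [ZMod.val_add, Nat.mod_mod_of_dvd _ hr2]

/-- translation by `v` restricted to `X⁺` -/
def tP (r s : ℕ) (hr2 : 2 ∣ r) (hr0 : r ≠ 0) (hs2 : 2 ∣ s) (hs0 : s ≠ 0)
    (v : ZMod r × ZMod s) (hv : v.1.val % 2 = v.2.val % 2) : Equiv.Perm (XPlus r s) :=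
  (Equiv.addRight v).subtypePerm (by
    intro x
    have h1 := val_add_mod_two' r hr2 hr0 x.1 v.1
    have h2 := val_add_mod_two' s hs2 hs0 x.2 v.2
    simp only [XPlus, Set.mem_setOf_eq, Equiv.coe_addRight, Prod.fst_add, Prod.snd_add]
    omega)

section tPlemmas

variable {r s : ℕ} (hr2 : 2 ∣ r) (hr0 : r ≠ 0) (hs2 : 2 ∣ s) (hs0 : s ≠ 0)

@[simp] lemma tP_apply (v : ZMod r × ZMod s) (hv) (x : XPlus r s) :
    ((tP r s hr2 hr0 hs2 hs0 v hv x : XPlus r s) : ZMod r × ZMod s) = ↑x + v := rfl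

lemma tP_pow_apply (v : ZMod r × ZMod s) (hv) (n : ℕ) (x : XPlus r s) :
    (((tP r s hr2 hr0 hs2 hs0 v hv ^ n) x : XPlus r s) : ZMod r × ZMod s) = ↑x + n • v := by
  induction n with
  | zero => simp
  | succ n ih =>
      rw [pow_succ', Equiv.Perm.mul_apply, tP_apply, ih, succ_nsmul, add_assoc]

lemma tP_inv_apply (v : ZMod r × ZMod s) (hv) (x : XPlus r s) :
    (((tP r s hr2 hr0 hs2 hs0 v hv)⁻¹ x : XPlus r s) : ZMod r × ZMod s) = ↑x - v := by
  have h := congrArg (Subtype.val) (show (tP r s hr2 hr0 hs2 hs0 v hv) ((tP r s hr2 hr0 hs2 hs0 v hv)⁻¹ x) = x from Equiv.apply_symm_apply _ x)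
  rw [tP_apply] at h
  rw [eq_sub_iff_add_eq, h]

lemma tP_zpow_apply (v : ZMod r × ZMod s) (hv) (k : ℤ) (x : XPlus r s) :
    (((tP r s hr2 hr0 hs2 hs0 v hv ^ k) x : XPlus r s) : ZMod r × ZMod s) = ↑x + k • v := by
  cases k with
  | ofNat n => rw [Int.ofNat_eq_coe, zpow_natCast, tP_pow_apply]; norm_num
  | negSucc n =>
      rw [zpow_negSucc]
      have h2 := congrArg Subtype.val
        (show (tP r s hr2 hr0 hs2 hs0 v hv ^ (n+1)) ((tP r s hr2 hr0 hs2 hs0 v hv ^ (n+1))⁻¹ x) = x from Equiv.apply_symm_apply _ x)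
      rw [tP_pow_apply] at h2
      have : (((tP r s hr2 hr0 hs2 hs0 v hv ^ (n+1))⁻¹ x : XPlus r s) : ZMod r × ZMod s)
          = ↑x - (n+1) • v := by rw [eq_sub_iff_add_eq, h2]
      rw [this, negSucc_zsmul, sub_eq_add_neg]

lemma tP_eq_zpow (v : ZMod r × ZMod s) (hv) (w : ZMod r × ZMod s) (hw) (k : ℤ)
    (h : k • v = w) :
    tP r s hr2 hr0 hs2 hs0 w hw = tP r s hr2 hr0 hs2 hs0 v hv ^ k := by
  refine Equiv.ext fun x => Subtype.ext ?_
  rw [tP_zpow_apply, tP_apply, h]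

lemma tP_mul (v : ZMod r × ZMod s) (hv) (w : ZMod r × ZMod s) (hw) (u) (hu) (h : v + w = u) :
    tP r s hr2 hr0 hs2 hs0 v hv * tP r s hr2 hr0 hs2 hs0 w hw
      = tP r s hr2 hr0 hs2 hs0 u hu := by
  refine Equiv.ext fun x => Subtype.ext ?_
  rw [Equiv.Perm.mul_apply]
  simp only [tP_apply]
  rw [add_assoc, add_comm w v, h]

lemma tP_inv (v : ZMod r × ZMod s) (hv) (w) (hw) (h : -v = w) :
    (tP r s hr2 hr0 hs2 hs0 v hv)⁻¹ = tP r s hr2 hr0 hs2 hs0 w hw := by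
  refine Equiv.ext fun x => Subtype.ext ?_
  rw [tP_inv_apply, tP_apply, ← h, sub_eq_add_neg]

end tPlemmas

section groupfacts

variable {r s : ℕ}

lemma par20 (hr2 : 2 ∣ r) (hr0 : r ≠ 0) (hs0 : s ≠ 0) : ((2 : ZMod r)).val % 2 = ((0 : ZMod s)).val % 2 := by
  haveI : NeZero s := ⟨hs0⟩
  have h := val_add_mod_two' r hr2 hr0 1 1
  rw [show (2 : ZMod r) = 1 + 1 by ring, ZMod.val_zero]
  omega

lemma par02 (hr0 : r ≠ 0) (hs2 : 2 ∣ s) (hs0 : s ≠ 0) : ((0 : ZMod r)).val % 2 = ((2 : ZMod s)).val % 2 := by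
  haveI : NeZero r := ⟨hr0⟩
  have h := val_add_mod_two' s hs2 hs0 1 1
  rw [show (2 : ZMod s) = 1 + 1 by ring, ZMod.val_zero]
  omega

lemma par11 (hr : 3 ≤ r) (hs : 3 ≤ s) :
    ((1 : ZMod r)).val % 2 = ((1 : ZMod s)).val % 2 := by
  haveI : Fact (1 < r) := ⟨by omega⟩
  haveI : Fact (1 < s) := ⟨by omega⟩
  rw [ZMod.val_one, ZMod.val_one]

variable (hr2 : 2 ∣ r) (hr0 : r ≠ 0) (hs2 : 2 ∣ s) (hs0 : s ≠ 0)

lemma sigmaP_apply (x : XPlus r s) :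
    ((sigmaP r s hr2 hr0 x : XPlus r s) : ZMod r × ZMod s)
      = (-(x : ZMod r × ZMod s).1, (x : ZMod r × ZMod s).2) := rfl

lemma muSqP_eq :
    muSqP r s hr2 hr0
      = tP r s hr2 hr0 hs2 hs0 ((2 : ZMod r), (0 : ZMod s)) (par20 hr2 hr0 hs0) := by
  refine Equiv.ext fun x => Subtype.ext ?_
  show (muSq r s) (x : ZMod r × ZMod s) = (x : ZMod r × ZMod s) + (2, 0)
  simp [muSq, Prod.ext_iff]

lemma muNuP_eq (hr : 3 ≤ r) (hs : 3 ≤ s) :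
    muNuP r s hr2 hr0 hs2 hs0
      = tP r s hr2 hr0 hs2 hs0 ((1 : ZMod r), (1 : ZMod s)) (par11 hr hs) := by
  refine Equiv.ext fun x => Subtype.ext ?_
  show (muNu r s) (x : ZMod r × ZMod s) = (x : ZMod r × ZMod s) + (1, 1)
  simp [muNu, Prod.ext_iff]

lemma sigmaP_mul_tP (v : ZMod r × ZMod s) (hv) :
    sigmaP r s hr2 hr0 * tP r s hr2 hr0 hs2 hs0 v hv
      = tP r s hr2 hr0 hs2 hs0 (-v.1, v.2)
          (by rw [val_neg_mod_two r hr2 hr0]; exact hv) * sigmaP r s hr2 hr0 := by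
  refine Equiv.ext fun x => Subtype.ext ?_
  rw [Equiv.Perm.mul_apply, Equiv.Perm.mul_apply, sigmaP_apply, tP_apply, tP_apply, sigmaP_apply]
  simp [Prod.ext_iff]
  ring

lemma sigmaP_inv : (sigmaP r s hr2 hr0)⁻¹ = sigmaP r s hr2 hr0 := by
  refine inv_eq_of_mul_eq_one_right (Equiv.ext fun x => Subtype.ext ?_)
  rw [Equiv.Perm.mul_apply, sigmaP_apply, sigmaP_apply]
  simp

end groupfacts

section main

lemma conj_zpow' {Gr : Type*} [Group Gr] (a y : Gr) (k : ℤ) :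
    a * y ^ k * a⁻¹ = (a * y * a⁻¹) ^ k := by
  have := map_zpow (MulAut.conj a) y k
  simpa [MulAut.conj_apply] using this

lemma pair_pigeon {α : Type*} {A B w1 w2 w3 : α} (h1 : w1 = A ∨ w1 = B)
    (h2 : w2 = A ∨ w2 = B) (h3 : w3 = A ∨ w3 = B)
    (d12 : w1 ≠ w2) (d13 : w1 ≠ w3) (d23 : w2 ≠ w3) : False := by
  rcases h1 with rfl | rfl <;> rcases h2 with h2 | h2 <;> rcases h3 with h3 | h3 <;> simp_all

lemma par_add {r s : ℕ} (hr2 : 2 ∣ r) (hr0 : r ≠ 0) (hs2 : 2 ∣ s) (hs0 : s ≠ 0)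
    (v w : ZMod r × ZMod s) (hv : v.1.val % 2 = v.2.val % 2) (hw : w.1.val % 2 = w.2.val % 2) :
    (v + w).1.val % 2 = (v + w).2.val % 2 := by
  have h1 := val_add_mod_two' r hr2 hr0 v.1 w.1
  have h2 := val_add_mod_two' s hs2 hs0 v.2 w.2
  simp only [Prod.fst_add, Prod.snd_add]
  omega

theorem main_contra (r s : ℕ) (hr : 3 ≤ r) (hs : 3 ≤ s) (hr2 : 2 ∣ r) (hs2 : 2 ∣ s)
    (hr0 : r ≠ 0) (hs0 : s ≠ 0)
    (v : ZMod r × ZMod s) (hv : v.1.val % 2 = v.2.val % 2)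
    (hmem : tP r s hr2 hr0 hs2 hs0 v hv ∈ GPlusGroup r s hr2 hr0 hs2 hs0)
    (hconj : ∃ k : ℤ, k • v = (-v.1, v.2))
    (hvne : v ≠ 0)
    (H : ∀ k : ℤ, k • v ≠ (1, 1) ∧ k • v ≠ (2, 0) ∧ k • v ≠ (1, -1) ∧
      k • v ≠ (0, 2) ∧ k • v ≠ (2, -2))
    (hbasic : IsBasic (GammaPlus r s) (GPlusGroup r s hr2 hr0 hs2 hs0)) : False := by
  haveI : NeZero r := ⟨hr0⟩
  haveI : NeZero s := ⟨hs0⟩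
  haveI : Fact (1 < r) := ⟨by omega⟩
  haveI : Fact (1 < s) := ⟨by omega⟩
  set g := tP r s hr2 hr0 hs2 hs0 v hv with hgdef
  set N := Subgroup.zpowers g with hNdef
  obtain ⟨k₀, hk₀⟩ := hconj
  have hparσ : (-v.1, v.2).1.val % 2 = (-v.1, v.2).2.val % 2 := by
    show (-v.1).val % 2 = v.2.val % 2
    rw [val_neg_mod_two r hr2 hr0]; exact hv
  have hgσ : tP r s hr2 hr0 hs2 hs0 (-v.1, v.2) hparσ = g ^ k₀ :=
    tP_eq_zpow hr2 hr0 hs2 hs0 v hv _ hparσ k₀ hk₀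
  -- commutation with translations
  have hcomm : ∀ w hw, tP r s hr2 hr0 hs2 hs0 w hw * g = g * tP r s hr2 hr0 hs2 hs0 w hw := by
    intro w hw
    rw [hgdef, tP_mul hr2 hr0 hs2 hs0 w hw v hv (w + v)
      (par_add hr2 hr0 hs2 hs0 w v hw hv) rfl,
      tP_mul hr2 hr0 hs2 hs0 v hv w hw (w + v)
      (par_add hr2 hr0 hs2 hs0 w v hw hv) (add_comm v w)]
  have key : ∀ h ∈ GPlusGroup r s hr2 hr0 hs2 hs0, h * g * h⁻¹ ∈ N ∧ h⁻¹ * g * h ∈ N := by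
    intro h hh
    rw [GPlusGroup] at hh
    induction hh using Subgroup.closure_induction with
    | mem x hx =>
        have hx' : x = muSqP r s hr2 hr0 ∨ x = muNuP r s hr2 hr0 hs2 hs0 ∨
            x = sigmaP r s hr2 hr0 := by simpa using hx
        have htrans : ∀ w hw, x = tP r s hr2 hr0 hs2 hs0 w hw →
            x * g * x⁻¹ ∈ N ∧ x⁻¹ * g * x ∈ N := by
          rintro w hw rfl
          constructor
          · rw [hcomm w hw, mul_inv_cancel_right]; exact Subgroup.mem_zpowers g
          · rw [mul_assoc, ← hcomm w hw, ← mul_assoc, inv_mul_cancel, one_mul]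
            exact Subgroup.mem_zpowers g
        rcases hx' with rfl | rfl | rfl
        · exact htrans _ _ (muSqP_eq hr2 hr0 hs2 hs0)
        · exact htrans _ _ (muNuP_eq hr2 hr0 hs2 hs0 hr hs)
        · have hσσ : sigmaP r s hr2 hr0 * g * sigmaP r s hr2 hr0 = g ^ k₀ := by
            rw [hgdef, sigmaP_mul_tP hr2 hr0 hs2 hs0 v hv, mul_assoc,
              show sigmaP r s hr2 hr0 * sigmaP r s hr2 hr0 = 1 by
                conv_lhs => rw [← sigmaP_inv hr2 hr0]
                exact inv_mul_cancel _,
              mul_one, ← hgdef, hgσ]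
          have hinv : (sigmaP r s hr2 hr0)⁻¹ = sigmaP r s hr2 hr0 :=
            sigmaP_inv hr2 hr0
          constructor
          · rw [hinv, hσσ]; exact Subgroup.zpow_mem _ (Subgroup.mem_zpowers g) k₀
          · rw [hinv, hσσ]; exact Subgroup.zpow_mem _ (Subgroup.mem_zpowers g) k₀
    | one =>
        refine ⟨?_, ?_⟩ <;>
          · simp only [one_mul, inv_one, mul_one]
            exact Subgroup.mem_zpowers g
    | mul a b ha hb pa pb =>
        constructor
        · obtain ⟨k, hk⟩ := Subgroup.mem_zpowers_iff.mp pb.1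
          have : a * b * g * (a * b)⁻¹ = a * (b * g * b⁻¹) * a⁻¹ := by
            rw [mul_inv_rev]; group
          rw [this, ← hk, conj_zpow']
          exact Subgroup.zpow_mem _ pa.1 k
        · obtain ⟨k, hk⟩ := Subgroup.mem_zpowers_iff.mp pa.2
          have : (a * b)⁻¹ * g * (a * b) = b⁻¹ * (a⁻¹ * g * a) * b := by
            rw [mul_inv_rev]; group
          rw [this, ← hk, show b⁻¹ * g ^ k * b = b⁻¹ * g ^ k * (b⁻¹)⁻¹ by rw [inv_inv],
            conj_zpow', inv_inv]
          exact Subgroup.zpow_mem _ pb.2 k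
    | inv a ha pa =>
        refine ⟨?_, ?_⟩
        · rw [inv_inv]; exact pa.2
        · rw [inv_inv]; exact pa.1
  have hNormal : NormalIn N (GPlusGroup r s hr2 hr0 hs2 hs0) := by
    refine ⟨Subgroup.zpowers_le.mpr hmem, fun h hh n hn => ?_⟩
    obtain ⟨k, hk⟩ := Subgroup.mem_zpowers_iff.mp hn
    rw [← hk, conj_zpow']
    exact Subgroup.zpow_mem _ (key h hh).1 k
  -- vertices
  have pf00 : ((0 : ZMod r), (0 : ZMod s)) ∈ XPlus r s := by
    simp [XPlus]
  have pf11 : ((1 : ZMod r), (1 : ZMod s)) ∈ XPlus r s := by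
    simp only [XPlus, Set.mem_setOf_eq]; exact par11 hr hs
  have pf20 : ((2 : ZMod r), (0 : ZMod s)) ∈ XPlus r s := by
    simp only [XPlus, Set.mem_setOf_eq]; exact par20 hr2 hr0 hs0
  have pf1m1 : ((1 : ZMod r), (-1 : ZMod s)) ∈ XPlus r s := by
    simp only [XPlus, Set.mem_setOf_eq]
    rw [val_neg_mod_two s hs2 hs0]; exact par11 hr hs
  have pfm11 : ((-1 : ZMod r), (1 : ZMod s)) ∈ XPlus r s := by
    simp only [XPlus, Set.mem_setOf_eq]
    rw [val_neg_mod_two r hr2 hr0]; exact par11 hr hs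
  set x00 : XPlus r s := ⟨((0 : ZMod r), (0 : ZMod s)), pf00⟩
  set x11 : XPlus r s := ⟨((1 : ZMod r), (1 : ZMod s)), pf11⟩
  set x20 : XPlus r s := ⟨((2 : ZMod r), (0 : ZMod s)), pf20⟩
  set x1m1 : XPlus r s := ⟨((1 : ZMod r), (-1 : ZMod s)), pf1m1⟩
  set xm11 : XPlus r s := ⟨((-1 : ZMod r), (1 : ZMod s)), pfm11⟩
  -- the orbit criterion
  have crit : ∀ x y : XPlus r s,
      Quotient.mk (orbitSetoid N) x = Quotient.mk (orbitSetoid N) y ↔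
        ∃ k : ℤ, (y : ZMod r × ZMod s) + k • v = (x : ZMod r × ZMod s) := by
    intro x y
    constructor
    · intro h
      have h2 : MulAction.orbitRel N (XPlus r s) x y := Quotient.exact h
      rw [MulAction.orbitRel_apply, MulAction.mem_orbit_iff] at h2
      obtain ⟨⟨n, hn⟩, hnx⟩ := h2
      obtain ⟨k, hk⟩ := Subgroup.mem_zpowers_iff.mp hn
      refine ⟨k, ?_⟩
      have hx : (g ^ k) y = x := by rw [hk]; exact hnx
      rw [← hx, hgdef, tP_zpow_apply]
    · rintro ⟨k, hk⟩
      refine Quotient.sound ?_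
      show MulAction.orbitRel N (XPlus r s) x y
      rw [MulAction.orbitRel_apply, MulAction.mem_orbit_iff]
      refine ⟨⟨g ^ k, Subgroup.zpow_mem _ (Subgroup.mem_zpowers g) k⟩, Subtype.ext ?_⟩
      show ((g ^ k) y : ZMod r × ZMod s) = ↑x
      rw [hgdef, tP_zpow_apply]; exact hk
  -- separation
  have sep : ∀ (a b : XPlus r s) (c : ZMod r × ZMod s),
      ((a : ZMod r × ZMod s) + c = (b : ZMod r × ZMod s)) → (∀ k : ℤ, k • v ≠ c) →
      Quotient.mk (orbitSetoid N) b ≠ Quotient.mk (orbitSetoid N) a := by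
    intro a b c hc hall h
    obtain ⟨k, hk⟩ := (crit b a).mp h
    exact hall k (add_left_cancel (hk.trans hc.symm))
  have d1 : Quotient.mk (orbitSetoid N) x11 ≠ Quotient.mk (orbitSetoid N) x00 :=
    sep x00 x11 (1, 1) (by norm_num [Prod.ext_iff]) (fun k => (H k).1)
  have d2 : Quotient.mk (orbitSetoid N) x20 ≠ Quotient.mk (orbitSetoid N) x00 :=
    sep x00 x20 (2, 0) (by norm_num [Prod.ext_iff]) (fun k => (H k).2.1)
  have d3 : Quotient.mk (orbitSetoid N) x20 ≠ Quotient.mk (orbitSetoid N) x11 :=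
    sep x11 x20 (1, -1) (by norm_num [Prod.ext_iff]) (fun k => (H k).2.2.1)
  have d4 : Quotient.mk (orbitSetoid N) x11 ≠ Quotient.mk (orbitSetoid N) x1m1 :=
    sep x1m1 x11 (0, 2) (by norm_num [Prod.ext_iff]) (fun k => (H k).2.2.2.1)
  have d5 : Quotient.mk (orbitSetoid N) x11 ≠ Quotient.mk (orbitSetoid N) xm11 :=
    sep xm11 x11 (2, 0) (by norm_num [Prod.ext_iff]) (fun k => (H k).2.1)
  have d6 : Quotient.mk (orbitSetoid N) x1m1 ≠ Quotient.mk (orbitSetoid N) xm11 :=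
    sep xm11 x1m1 (2, -2) (by norm_num [Prod.ext_iff]) (fun k => (H k).2.2.2.2)
  have d7 : Quotient.mk (orbitSetoid N) x1m1 ≠ Quotient.mk (orbitSetoid N) x00 :=
    sep x00 x1m1 (1, -1) (by norm_num [Prod.ext_iff]) (fun k => (H k).2.2.1)
  have d8 : Quotient.mk (orbitSetoid N) x00 ≠ Quotient.mk (orbitSetoid N) xm11 :=
    sep xm11 x00 (1, -1) (by norm_num [Prod.ext_iff]) (fun k => (H k).2.2.1)
  -- nontrivial
  have hNbot : N ≠ ⊥ := by
    intro h1
    have h1 : g = 1 := Subgroup.zpowers_eq_bot.mp h1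
    have := congrArg (fun (p : Equiv.Perm (XPlus r s)) => ((p x00 : XPlus r s) : ZMod r × ZMod s)) h1
    simp only [hgdef, tP_apply, Equiv.Perm.one_apply] at this
    apply hvne
    simpa using this
  -- adjacency in the quotient graph
  have qadj : ∀ a b : XPlus r s, gammaRel r s ↑a ↑b → (a : ZMod r × ZMod s) ≠ ↑b →
      Quotient.mk (orbitSetoid N) a ≠ Quotient.mk (orbitSetoid N) b →
      (quotientGraph (GammaPlus r s) N).Adj
        (Quotient.mk (orbitSetoid N) a) (Quotient.mk (orbitSetoid N) b) := by
    intro a b hrel hab hne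
    have hadj : (GammaPlus r s).Adj a b := by
      show (Gamma r s).Adj ↑a ↑b
      exact ⟨hab, Or.inl hrel⟩
    show (SimpleGraph.fromRel _).Adj _ _
    rw [SimpleGraph.fromRel_adj]
    exact ⟨hne, Or.inl ⟨a, b, rfl, rfl, hadj⟩⟩
  have a1 : (quotientGraph (GammaPlus r s) N).Adj
      (Quotient.mk (orbitSetoid N) x00) (Quotient.mk (orbitSetoid N) x11) :=
    qadj x00 x11 ⟨Or.inl (zero_add 1).symm, Or.inl (zero_add 1).symm⟩
      (by simp [x00, x11, Prod.ext_iff]) d1.symm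
  have a2 : (quotientGraph (GammaPlus r s) N).Adj
      (Quotient.mk (orbitSetoid N) x00) (Quotient.mk (orbitSetoid N) x1m1) :=
    qadj x00 x1m1 ⟨Or.inl (zero_add 1).symm, Or.inr (zero_sub 1).symm⟩
      (by simp [x00, x1m1, Prod.ext_iff]) d7.symm
  have a3 : (quotientGraph (GammaPlus r s) N).Adj
      (Quotient.mk (orbitSetoid N) x00) (Quotient.mk (orbitSetoid N) xm11) :=
    qadj x00 xm11 ⟨Or.inr (zero_sub 1).symm, Or.inl (zero_add 1).symm⟩
      (by simp [x00, xm11, Prod.ext_iff]) d8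
  -- conclude
  haveI : Finite (XPlus r s) := Subtype.finite
  haveI : Finite (Quotient (orbitSetoid N)) := Quotient.finite _
  rcases hbasic N hNormal hNbot with hcard | hcyc
  · classical
    haveI : Fintype (Quotient (orbitSetoid N)) := Fintype.ofFinite _
    have hT : ({Quotient.mk (orbitSetoid N) x00, Quotient.mk (orbitSetoid N) x11,
        Quotient.mk (orbitSetoid N) x20} : Finset (Quotient (orbitSetoid N))).card = 3 := by
      rw [Finset.card_insert_of_notMem, Finset.card_insert_of_notMem,
        Finset.card_singleton]
      · simp only [Finset.mem_singleton]; exact d3.symm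
      · simp only [Finset.mem_insert, Finset.mem_singleton]
        push_neg
        exact ⟨d1.symm, d2.symm⟩
    have h3 : 3 ≤ Nat.card (Quotient (orbitSetoid N)) := by
      rw [Nat.card_eq_fintype_card, ← Finset.card_univ, ← hT]
      exact Finset.card_le_univ _
    omega
  · obtain ⟨m, hm3, ⟨e⟩⟩ := hcyc
    obtain ⟨m', rfl⟩ : ∃ m', m = m' + 2 := ⟨m - 2, by omega⟩
    have h1 : (cycleGraph (m' + 2)).Adj (e (Quotient.mk (orbitSetoid N) x00))
        (e (Quotient.mk (orbitSetoid N) x11)) := e.map_adj_iff.mpr a1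
    have h2 : (cycleGraph (m' + 2)).Adj (e (Quotient.mk (orbitSetoid N) x00))
        (e (Quotient.mk (orbitSetoid N) x1m1)) := e.map_adj_iff.mpr a2
    have h3 : (cycleGraph (m' + 2)).Adj (e (Quotient.mk (orbitSetoid N) x00))
        (e (Quotient.mk (orbitSetoid N) xm11)) := e.map_adj_iff.mpr a3
    have hmem1 := (SimpleGraph.mem_neighborSet _ _ _).mpr h1
    have hmem2 := (SimpleGraph.mem_neighborSet _ _ _).mpr h2
    have hmem3 := (SimpleGraph.mem_neighborSet _ _ _).mpr h3
    rw [SimpleGraph.cycleGraph_neighborSet] at hmem1 hmem2 hmem3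
    simp only [Set.mem_insert_iff, Set.mem_singleton_iff] at hmem1 hmem2 hmem3
    exact pair_pigeon hmem1 hmem2 hmem3
      (fun hh => d4 (e.injective hh))
      (fun hh => d5 (e.injective hh))
      (fun hh => d6 (e.injective hh))

section cases

lemma val_natCast_mod_two (r : ℕ) (hr2 : 2 ∣ r) (hr0 : r ≠ 0) (a : ℕ) :
    ((a : ZMod r)).val % 2 = a % 2 := by
  haveI : NeZero r := ⟨hr0⟩
  rw [ZMod.val_natCast, Nat.mod_mod_of_dvd _ hr2]

lemma zmod_natCast_ne (m a b : ℕ) (ha : a < m) (hb : b < m) (hne : a ≠ b) :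
    ((a : ZMod m)) ≠ (b : ZMod m) := by
  intro h
  have := congrArg ZMod.val h
  rw [ZMod.val_natCast_of_lt ha, ZMod.val_natCast_of_lt hb] at this
  exact hne this

lemma zmod_two_ne_zero (m : ℕ) (hm : 2 < m) : (2 : ZMod m) ≠ 0 := by
  have := zmod_natCast_ne m 2 0 hm (by omega) (by omega)
  simpa using this

lemma zmod_one_ne_zero (m : ℕ) (hm : 1 < m) : (1 : ZMod m) ≠ 0 := by
  have := zmod_natCast_ne m 1 0 hm (by omega) (by omega)
  simpa using this

lemma caseA (r s : ℕ) (hr : 3 ≤ r) (hs : 3 ≤ s) (hr2 : 2 ∣ r) (hs2 : 2 ∣ s)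
    (hr0 : r ≠ 0) (hs0 : s ≠ 0) (d : ℕ) (hd2 : 2 ∣ d) (hd4 : 4 ≤ d) (hdr : d ∣ r)
    (hdlt : d < r)
    (hbasic : IsBasic (GammaPlus r s) (GPlusGroup r s hr2 hr0 hs2 hs0)) : False := by
  haveI : NeZero r := ⟨hr0⟩
  haveI : NeZero s := ⟨hs0⟩
  haveI : NeZero d := ⟨by omega⟩
  haveI : Fact (1 < r) := ⟨by omega⟩
  haveI : Fact (1 < s) := ⟨by omega⟩
  obtain ⟨e, rfl⟩ := hd2
  set v : ZMod r × ZMod s := (((2 * e : ℕ) : ZMod r), 0) with hvdef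
  have hv : v.1.val % 2 = v.2.val % 2 := by
    show ((2 * e : ℕ) : ZMod r).val % 2 = (0 : ZMod s).val % 2
    rw [val_natCast_mod_two r hr2 hr0, ZMod.val_zero]
    omega
  have ht20 : tP r s hr2 hr0 hs2 hs0 ((2 : ZMod r), (0 : ZMod s)) (par20 hr2 hr0 hs0)
      ∈ GPlusGroup r s hr2 hr0 hs2 hs0 := by
    rw [← muSqP_eq hr2 hr0 hs2 hs0]
    exact Subgroup.subset_closure (Set.mem_insert _ _)
  have hveq : ((e : ℤ)) • ((2 : ZMod r), (0 : ZMod s)) = v := by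
    rw [Prod.smul_mk, hvdef]
    rw [Prod.ext_iff]
    constructor
    · show (e : ℤ) • (2 : ZMod r) = _
      rw [zsmul_eq_mul]
      push_cast
      ring
    · simp
  have hmem : tP r s hr2 hr0 hs2 hs0 v hv ∈ GPlusGroup r s hr2 hr0 hs2 hs0 := by
    rw [tP_eq_zpow hr2 hr0 hs2 hs0 _ (par20 hr2 hr0 hs0) v hv (e : ℤ) hveq]
    exact Subgroup.zpow_mem _ ht20 _
  refine main_contra r s hr hs hr2 hs2 hr0 hs0 v hv hmem ⟨-1, ?_⟩ ?_ ?_ hbasic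
  · rw [hvdef, Prod.smul_mk, Prod.ext_iff]
    constructor
    · show (-1 : ℤ) • ((2 * e : ℕ) : ZMod r) = -((2 * e : ℕ) : ZMod r)
      rw [neg_smul, one_smul]
    · show (-1 : ℤ) • (0 : ZMod s) = (0 : ZMod s)
      simp
  · rw [hvdef]
    intro h
    rw [Prod.ext_iff] at h
    have h1 : ((2 * e : ℕ) : ZMod r) = 0 := h.1
    exact zmod_natCast_ne r (2 * e) 0 hdlt (by omega) (by omega) (by simpa using h1)
  · intro k
    have hsnd : (k • v).2 = 0 := by rw [hvdef]; simp
    refine ⟨?_, ?_, ?_, ?_, ?_⟩ <;> intro heq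
    · have := congrArg Prod.snd heq
      rw [hsnd] at this
      exact zmod_one_ne_zero s (by omega) this.symm
    · -- k • v = (2, 0) : use castHom to ZMod d
      have h1 : (k • v).1 = 2 := congrArg Prod.fst heq
      have h2 : (k • v).1 = k • ((2 * e : ℕ) : ZMod r) := by rw [hvdef]; simp
      have h3 := congrArg (ZMod.castHom hdr (ZMod (2 * e))) (h2.symm.trans h1)
      rw [map_zsmul, map_natCast, ZMod.natCast_self, smul_zero, map_ofNat] at h3
      exact zmod_two_ne_zero (2 * e) (by omega) h3.symm
    · have := congrArg Prod.snd heq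
      rw [hsnd] at this
      have : (1 : ZMod s) = 0 := by
        have h := this.symm
        rwa [neg_eq_zero] at h
      exact zmod_one_ne_zero s (by omega) this
    · have := congrArg Prod.snd heq
      rw [hsnd] at this
      exact zmod_two_ne_zero s (by omega) this.symm
    · have := congrArg Prod.snd heq
      rw [hsnd] at this
      have : (2 : ZMod s) = 0 := by
        have h := this.symm
        rwa [neg_eq_zero] at h
      exact zmod_two_ne_zero s (by omega) this

end cases

section casesBC

lemma val_two_even (r : ℕ) (hr2 : 2 ∣ r) (hr0 : r ≠ 0) : (2 : ZMod r).val % 2 = 0 := by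
  have h := val_add_mod_two' r hr2 hr0 1 1
  rw [show (2 : ZMod r) = 1 + 1 by ring]
  omega

lemma caseB (r s : ℕ) (hr : 3 ≤ r) (hs : 3 ≤ s) (hr2 : 2 ∣ r) (hs2 : 2 ∣ s)
    (hr0 : r ≠ 0) (hs0 : s ≠ 0) (d : ℕ) (hd2 : 2 ∣ d) (hd4 : 4 ≤ d) (hds : d ∣ s)
    (hdlt : d < s)
    (hbasic : IsBasic (GammaPlus r s) (GPlusGroup r s hr2 hr0 hs2 hs0)) : False := by
  haveI : NeZero r := ⟨hr0⟩
  haveI : NeZero s := ⟨hs0⟩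
  haveI : Fact (1 < r) := ⟨by omega⟩
  haveI : Fact (1 < s) := ⟨by omega⟩
  obtain ⟨e, rfl⟩ := hd2
  set v : ZMod r × ZMod s := ((0 : ZMod r), ((2 * e : ℕ) : ZMod s)) with hvdef
  have hv : v.1.val % 2 = v.2.val % 2 := by
    show (0 : ZMod r).val % 2 = ((2 * e : ℕ) : ZMod s).val % 2
    rw [val_natCast_mod_two s hs2 hs0, ZMod.val_zero]
    omega
  -- membership of tP (0,2)
  have ht20 : tP r s hr2 hr0 hs2 hs0 ((2 : ZMod r), (0 : ZMod s)) (par20 hr2 hr0 hs0)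
      ∈ GPlusGroup r s hr2 hr0 hs2 hs0 := by
    rw [← muSqP_eq hr2 hr0 hs2 hs0]
    exact Subgroup.subset_closure (Set.mem_insert _ _)
  have ht11 : tP r s hr2 hr0 hs2 hs0 ((1 : ZMod r), (1 : ZMod s)) (par11 hr hs)
      ∈ GPlusGroup r s hr2 hr0 hs2 hs0 := by
    rw [← muNuP_eq hr2 hr0 hs2 hs0 hr hs]
    exact Subgroup.subset_closure (Set.mem_insert_of_mem _ (Set.mem_insert _ _))
  have p22 : ((2 : ZMod r), (2 : ZMod s)).1.val % 2 = ((2 : ZMod r), (2 : ZMod s)).2.val % 2 := by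
    show (2 : ZMod r).val % 2 = (2 : ZMod s).val % 2
    rw [val_two_even r hr2 hr0, val_two_even s hs2 hs0]
  have pneg : ((-2 : ZMod r), (0 : ZMod s)).1.val % 2
      = ((-2 : ZMod r), (0 : ZMod s)).2.val % 2 := by
    show (-2 : ZMod r).val % 2 = (0 : ZMod s).val % 2
    rw [val_neg_mod_two r hr2 hr0, val_two_even r hr2 hr0, ZMod.val_zero]
  have m1 : tP r s hr2 hr0 hs2 hs0 ((1 : ZMod r), (1 : ZMod s)) (par11 hr hs)
      * tP r s hr2 hr0 hs2 hs0 ((1 : ZMod r), (1 : ZMod s)) (par11 hr hs)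
      = tP r s hr2 hr0 hs2 hs0 ((2 : ZMod r), (2 : ZMod s)) p22 :=
    tP_mul hr2 hr0 hs2 hs0 _ _ _ _ _ p22 (by norm_num [Prod.ext_iff])
  have hinv20 : (tP r s hr2 hr0 hs2 hs0 ((2 : ZMod r), (0 : ZMod s)) (par20 hr2 hr0 hs0))⁻¹
      = tP r s hr2 hr0 hs2 hs0 ((-2 : ZMod r), (0 : ZMod s)) pneg :=
    tP_inv hr2 hr0 hs2 hs0 _ _ _ pneg (by norm_num [Prod.ext_iff])
  have m2 : tP r s hr2 hr0 hs2 hs0 ((2 : ZMod r), (2 : ZMod s)) p22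
      * tP r s hr2 hr0 hs2 hs0 ((-2 : ZMod r), (0 : ZMod s)) pneg
      = tP r s hr2 hr0 hs2 hs0 ((0 : ZMod r), (2 : ZMod s)) (par02 hr0 hs2 hs0) :=
    tP_mul hr2 hr0 hs2 hs0 _ _ _ _ _ _ (by norm_num [Prod.ext_iff])
  have ht02 : tP r s hr2 hr0 hs2 hs0 ((0 : ZMod r), (2 : ZMod s)) (par02 hr0 hs2 hs0)
      ∈ GPlusGroup r s hr2 hr0 hs2 hs0 := by
    rw [← m2, ← m1, ← hinv20]
    exact mul_mem (mul_mem ht11 ht11) (inv_mem ht20)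
  have hveq : ((e : ℤ)) • ((0 : ZMod r), (2 : ZMod s)) = v := by
    rw [Prod.smul_mk, hvdef, Prod.ext_iff]
    constructor
    · simp
    · show (e : ℤ) • (2 : ZMod s) = _
      rw [zsmul_eq_mul]
      push_cast
      ring
  have hmem : tP r s hr2 hr0 hs2 hs0 v hv ∈ GPlusGroup r s hr2 hr0 hs2 hs0 := by
    rw [tP_eq_zpow hr2 hr0 hs2 hs0 _ (par02 hr0 hs2 hs0) v hv (e : ℤ) hveq]
    exact Subgroup.zpow_mem _ ht02 _
  refine main_contra r s hr hs hr2 hs2 hr0 hs0 v hv hmem ⟨1, ?_⟩ ?_ ?_ hbasic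
  · rw [one_smul, hvdef, Prod.ext_iff]
    exact ⟨neg_zero.symm, rfl⟩
  · rw [hvdef]
    intro h
    rw [Prod.ext_iff] at h
    exact zmod_natCast_ne s (2 * e) 0 hdlt (by omega) (by omega) (by simpa using h.2)
  · intro k
    have hfst : (k • v).1 = 0 := by rw [hvdef]; simp
    refine ⟨?_, ?_, ?_, ?_, ?_⟩ <;> intro heq
    · have := congrArg Prod.fst heq
      rw [hfst] at this
      exact zmod_one_ne_zero r (by omega) this.symm
    · have := congrArg Prod.fst heq
      rw [hfst] at this
      exact zmod_two_ne_zero r (by omega) this.symm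
    · have := congrArg Prod.fst heq
      rw [hfst] at this
      exact zmod_one_ne_zero r (by omega) this.symm
    · have h1 : (k • v).2 = 2 := congrArg Prod.snd heq
      have h2 : (k • v).2 = k • ((2 * e : ℕ) : ZMod s) := by rw [hvdef]; simp
      have h3 := congrArg (ZMod.castHom hds (ZMod (2 * e))) (h2.symm.trans h1)
      rw [map_zsmul, map_natCast, ZMod.natCast_self, smul_zero, map_ofNat] at h3
      exact zmod_two_ne_zero (2 * e) (by omega) h3.symm
    · have := congrArg Prod.fst heq
      rw [hfst] at this
      exact zmod_two_ne_zero r (by omega) this.symm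

end casesBC

section caseCsec

lemma caseC (p q : ℕ) (hp3 : 3 ≤ p) (hq3 : 3 ≤ q) (hop : Odd p) (hoq : Odd q)
    (hr2 : 2 ∣ 2 * p) (hs2 : 2 ∣ 2 * q) (hr0 : 2 * p ≠ 0) (hs0 : 2 * q ≠ 0)
    (hbasic : IsBasic (GammaPlus (2 * p) (2 * q))
      (GPlusGroup (2 * p) (2 * q) hr2 hr0 hs2 hs0)) : False := by
  set r := 2 * p with hrdef
  set s := 2 * q with hsdef
  have hr : 3 ≤ r := by omega
  have hs : 3 ≤ s := by omega
  haveI : NeZero r := ⟨hr0⟩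
  haveI : NeZero s := ⟨hs0⟩
  haveI : Fact (1 < r) := ⟨by omega⟩
  haveI : Fact (1 < s) := ⟨by omega⟩
  set v : ZMod r × ZMod s := (((p : ℕ) : ZMod r), ((q : ℕ) : ZMod s)) with hvdef
  have hv : v.1.val % 2 = v.2.val % 2 := by
    show ((p : ℕ) : ZMod r).val % 2 = ((q : ℕ) : ZMod s).val % 2
    rw [val_natCast_mod_two r hr2 hr0, val_natCast_mod_two s hs2 hs0,
      Nat.odd_iff.mp hop, Nat.odd_iff.mp hoq]
  -- group membership
  have ht20 : tP r s hr2 hr0 hs2 hs0 ((2 : ZMod r), (0 : ZMod s)) (par20 hr2 hr0 hs0)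
      ∈ GPlusGroup r s hr2 hr0 hs2 hs0 := by
    rw [← muSqP_eq hr2 hr0 hs2 hs0]
    exact Subgroup.subset_closure (Set.mem_insert _ _)
  have ht11 : tP r s hr2 hr0 hs2 hs0 ((1 : ZMod r), (1 : ZMod s)) (par11 hr hs)
      ∈ GPlusGroup r s hr2 hr0 hs2 hs0 := by
    rw [← muNuP_eq hr2 hr0 hs2 hs0 hr hs]
    exact Subgroup.subset_closure (Set.mem_insert_of_mem _ (Set.mem_insert _ _))
  obtain ⟨c, hc⟩ : ∃ c : ℤ, (p : ℤ) - q = 2 * c := by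
    obtain ⟨a, ha⟩ := hop
    obtain ⟨b, hb⟩ := hoq
    exact ⟨(a : ℤ) - b, by push_cast [ha, hb]; ring⟩
  set w1 : ZMod r × ZMod s := (((q : ℕ) : ZMod r), ((q : ℕ) : ZMod s)) with hw1def
  have pw1 : w1.1.val % 2 = w1.2.val % 2 := by
    show ((q : ℕ) : ZMod r).val % 2 = ((q : ℕ) : ZMod s).val % 2
    rw [val_natCast_mod_two r hr2 hr0, val_natCast_mod_two s hs2 hs0]
  set w2 : ZMod r × ZMod s := (((p : ℕ) : ZMod r) - ((q : ℕ) : ZMod r), (0 : ZMod s))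
    with hw2def
  have pw2 : w2.1.val % 2 = w2.2.val % 2 := by
    show (((p : ℕ) : ZMod r) - ((q : ℕ) : ZMod r)).val % 2 = (0 : ZMod s).val % 2
    rw [sub_eq_add_neg]
    have e1 := val_add_mod_two' r hr2 hr0 ((p : ℕ) : ZMod r) (-((q : ℕ) : ZMod r))
    have e2 := val_neg_mod_two r hr2 hr0 ((q : ℕ) : ZMod r)
    have e3 := val_natCast_mod_two r hr2 hr0 p
    have e4 := val_natCast_mod_two r hr2 hr0 q
    have e5 := Nat.odd_iff.mp hop
    have e6 := Nat.odd_iff.mp hoq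
    rw [ZMod.val_zero]
    omega
  have hq1 : ((q : ℤ)) • ((1 : ZMod r), (1 : ZMod s)) = w1 := by
    rw [Prod.smul_mk, hw1def, Prod.ext_iff]
    constructor
    · show (q : ℤ) • (1 : ZMod r) = _
      rw [zsmul_eq_mul]; push_cast; ring
    · show (q : ℤ) • (1 : ZMod s) = _
      rw [zsmul_eq_mul]; push_cast; ring
  have hc2 : (c : ℤ) • ((2 : ZMod r), (0 : ZMod s)) = w2 := by
    rw [Prod.smul_mk, hw2def, Prod.ext_iff]
    constructor
    · show (c : ℤ) • (2 : ZMod r) = _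
      have := congrArg (fun z : ℤ => ((z : ZMod r))) hc
      push_cast at this
      rw [zsmul_eq_mul]
      linear_combination -this
    · simp
  have hw1mem : tP r s hr2 hr0 hs2 hs0 w1 pw1 ∈ GPlusGroup r s hr2 hr0 hs2 hs0 := by
    rw [tP_eq_zpow hr2 hr0 hs2 hs0 _ (par11 hr hs) w1 pw1 (q : ℤ) hq1]
    exact Subgroup.zpow_mem _ ht11 _
  have hw2mem : tP r s hr2 hr0 hs2 hs0 w2 pw2 ∈ GPlusGroup r s hr2 hr0 hs2 hs0 := by
    rw [tP_eq_zpow hr2 hr0 hs2 hs0 _ (par20 hr2 hr0 hs0) w2 pw2 c hc2]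
    exact Subgroup.zpow_mem _ ht20 _
  have hsum : w1 + w2 = v := by
    rw [hw1def, hw2def, hvdef, Prod.ext_iff]
    constructor
    · show ((q : ℕ) : ZMod r) + (((p : ℕ) : ZMod r) - ((q : ℕ) : ZMod r)) = _
      ring
    · show ((q : ℕ) : ZMod s) + 0 = _
      ring
  have hmul : tP r s hr2 hr0 hs2 hs0 w1 pw1 * tP r s hr2 hr0 hs2 hs0 w2 pw2
      = tP r s hr2 hr0 hs2 hs0 v hv :=
    tP_mul hr2 hr0 hs2 hs0 _ _ _ _ _ hv hsum
  have hmem : tP r s hr2 hr0 hs2 hs0 v hv ∈ GPlusGroup r s hr2 hr0 hs2 hs0 := by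
    rw [← hmul]; exact mul_mem hw1mem hw2mem
  -- key ZMod facts
  have hpp : ((p : ℕ) : ZMod r) + ((p : ℕ) : ZMod r) = 0 := by
    rw [← Nat.cast_add, show p + p = 2 * p by ring, hrdef, ZMod.natCast_self]
  have hqq : ((q : ℕ) : ZMod s) + ((q : ℕ) : ZMod s) = 0 := by
    rw [← Nat.cast_add, show q + q = 2 * q by ring, hsdef, ZMod.natCast_self]
  have hvv : v + v = 0 := by
    rw [hvdef, Prod.ext_iff]
    exact ⟨hpp, hqq⟩
  have Slem : ∀ k : ℤ, k • v = 0 ∨ k • v = v := by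
    intro k
    rcases Int.even_or_odd k with ⟨t, ht⟩ | ⟨t, ht⟩
    · left
      rw [ht, show t + t = 2 * t by ring, mul_comm, mul_zsmul, two_zsmul, hvv, smul_zero]
    · right
      rw [ht, add_zsmul, mul_comm, mul_zsmul, two_zsmul, hvv, smul_zero, zero_add, one_zsmul]
  -- component facts
  have hp0 : ((p : ℕ) : ZMod r) ≠ 0 := by
    have := zmod_natCast_ne r p 0 (by omega) (by omega) (by omega)
    simpa using this
  have hq0 : ((q : ℕ) : ZMod s) ≠ 0 := by
    have := zmod_natCast_ne s q 0 (by omega) (by omega) (by omega)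
    simpa using this
  have hp1 : ((p : ℕ) : ZMod r) ≠ 1 := by
    have := zmod_natCast_ne r p 1 (by omega) (by omega) (by omega)
    simpa using this
  have hp2 : ((p : ℕ) : ZMod r) ≠ 2 := by
    have hodd := Nat.odd_iff.mp hop
    have := zmod_natCast_ne r p 2 (by omega) (by omega) (by omega)
    simpa using this
  refine main_contra r s hr hs hr2 hs2 hr0 hs0 v hv hmem ⟨1, ?_⟩ ?_ ?_ hbasic
  · rw [one_smul, hvdef, Prod.ext_iff]
    refine ⟨?_, rfl⟩
    show ((p : ℕ) : ZMod r) = -((p : ℕ) : ZMod r)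
    exact eq_neg_of_add_eq_zero_left hpp
  · rw [hvdef]
    intro h
    rw [Prod.ext_iff] at h
    exact hp0 h.1
  · intro k
    refine ⟨?_, ?_, ?_, ?_, ?_⟩ <;> intro heq <;> rcases Slem k with h0 | hvk
    -- (1,1)
    · have := congrArg Prod.fst (h0.symm.trans heq)
      exact zmod_one_ne_zero r (by omega) (by simpa using this.symm)
    · have := congrArg Prod.fst (hvk.symm.trans heq)
      exact hp1 this
    -- (2,0)
    · have := congrArg Prod.fst (h0.symm.trans heq)
      exact zmod_two_ne_zero r (by omega) (by simpa using this.symm)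
    · have := congrArg Prod.snd (hvk.symm.trans heq)
      exact hq0 this
    -- (1,-1)
    · have := congrArg Prod.fst (h0.symm.trans heq)
      exact zmod_one_ne_zero r (by omega) (by simpa using this.symm)
    · have := congrArg Prod.fst (hvk.symm.trans heq)
      exact hp1 this
    -- (0,2)
    · have := congrArg Prod.snd (h0.symm.trans heq)
      exact zmod_two_ne_zero s (by omega) (by simpa using this.symm)
    · have := congrArg Prod.fst (hvk.symm.trans heq)
      exact hp0 this
    -- (2,-2)
    · have := congrArg Prod.fst (h0.symm.trans heq)
      exact zmod_two_ne_zero r (by omega) (by simpa using this.symm)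
    · have := congrArg Prod.fst (hvk.symm.trans heq)
      exact hp2 this

end caseCsec

theorem stmt1' (r s : ℕ) (hr : 3 ≤ r) (hs : 3 ≤ s) (hre : 2 ∣ r) (hse : 2 ∣ s)
    (hbasic : BasicOfCycleType (GammaPlus r s)
      (GPlusGroup r s hre (Nat.pos_iff_ne_zero.mp (by omega)) hse
        (Nat.pos_iff_ne_zero.mp (by omega)))) :
    (r = 4 ∧ s = 4) ∨ (∃ p : ℕ, p.Prime ∧ Odd p ∧ r = 4 ∧ s = 2 * p) ∨
      (∃ p : ℕ, p.Prime ∧ Odd p ∧ r = 2 * p ∧ s = 4) := by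
  have hr0 : r ≠ 0 := by omega
  have hs0 : s ≠ 0 := by omega
  have hb : IsBasic (GammaPlus r s) (GPlusGroup r s hre hr0 hse hs0) := hbasic.1
  have hrcl : r = 4 ∨ ∃ p : ℕ, p.Prime ∧ Odd p ∧ r = 2 * p := by
    by_contra hcon
    push_neg at hcon
    obtain ⟨h4, hnp⟩ := hcon
    have hre' := hre
    obtain ⟨m, hm⟩ := hre'
    have hm2 : 2 ≤ m := by omega
    have hmnp : ¬ m.Prime := by
      intro hpm
      rcases hpm.eq_two_or_odd' with h2 | hodd
      · exact h4 (by omega)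
      · exact hnp m hpm hodd hm
    obtain ⟨e, he, he2, helt⟩ := Nat.exists_dvd_of_not_prime2 hm2 hmnp
    obtain ⟨f, hf⟩ := he
    exact caseA r s hr hs hre hse hr0 hs0 (2 * e) ⟨e, rfl⟩ (by omega)
      ⟨f, by rw [hm, hf]; ring⟩ (by omega) hb
  have hscl : s = 4 ∨ ∃ p : ℕ, p.Prime ∧ Odd p ∧ s = 2 * p := by
    by_contra hcon
    push_neg at hcon
    obtain ⟨h4, hnp⟩ := hcon
    have hse' := hse
    obtain ⟨m, hm⟩ := hse'
    have hm2 : 2 ≤ m := by omega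
    have hmnp : ¬ m.Prime := by
      intro hpm
      rcases hpm.eq_two_or_odd' with h2 | hodd
      · exact h4 (by omega)
      · exact hnp m hpm hodd hm
    obtain ⟨e, he, he2, helt⟩ := Nat.exists_dvd_of_not_prime2 hm2 hmnp
    obtain ⟨f, hf⟩ := he
    exact caseB r s hr hs hre hse hr0 hs0 (2 * e) ⟨e, rfl⟩ (by omega)
      ⟨f, by rw [hm, hf]; ring⟩ (by omega) hb
  rcases hrcl with hr4 | ⟨p, hp, hop, hrp⟩
  · rcases hscl with hs4 | ⟨q, hq, hoq, hsq⟩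
    · exact Or.inl ⟨hr4, hs4⟩
    · exact Or.inr (Or.inl ⟨q, hq, hoq, hr4, hsq⟩)
  · rcases hscl with hs4 | ⟨q, hq, hoq, hsq⟩
    · exact Or.inr (Or.inr ⟨p, hp, hop, hrp, hs4⟩)
    · exfalso
      subst hrp
      subst hsq
      exact caseC p q
        (by have h1 := hp.two_le; have h2 := Nat.odd_iff.mp hop; omega)
        (by have h1 := hq.two_le; have h2 := Nat.odd_iff.mp hoq; omega)
        hop hoq hre hse hr0 hs0 hb

/-- if `(Γ⁺(r,s), G⁺(r,s))` (with `r,s ≥ 3` both even) is basic of cycle type,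
then `(r,s)` is `(4,4)`, `(4,2p)` or `(2p,4)` for an odd prime `p`. -/
theorem stmt1 (r s : ℕ) (hr : 3 ≤ r) (hs : 3 ≤ s) (hre : 2 ∣ r) (hse : 2 ∣ s)
    (hbasic : BasicOfCycleType (GammaPlus r s)
      (GPlusGroup r s hre (by omega) hse (by omega))) :
    (r = 4 ∧ s = 4) ∨ (∃ p : ℕ, p.Prime ∧ Odd p ∧ r = 4 ∧ s = 2 * p) ∨
      (∃ p : ℕ, p.Prime ∧ Odd p ∧ r = 2 * p ∧ s = 4) :=
  stmt1' r s hr hs hre hse hbasic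

end main

end OG4
end

section
/- Let G be a group and H a subgroup of G of index 2, and let M be a minimal normal subgroup of H. Then either (i) M is normal in G, and in that case M is a minimal normal subgroup of G contained in H; or (ii) there exists g ∈ G with g ∉ H such that M^g ≠ M, M ∩ M^g is trivial, and the subgroup generated by M and M^g (which is their internal direct product M × M^g) is a normal subgroup of G contained in H. -/
open SimpleGraph

namespace OG4

variable {V : Type*} {W : Type*}

section aux
variable {G : Type*} [Group G]

lemma mem_conjMap_iff (M : Subgroup G) (g x : G) :
    x ∈ M.map (MulAut.conj g).toMonoidHom ↔ g⁻¹ * x * g ∈ M := by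
  constructor
  · rintro ⟨m, hm, rfl⟩
    simpa [MulAut.conj_apply, mul_assoc] using hm
  · intro h
    exact ⟨g⁻¹ * x * g, h, by simp [MulAut.conj_apply]; group⟩

lemma conjMap_conjMap (M : Subgroup G) (g h : G) :
    (M.map (MulAut.conj g).toMonoidHom).map (MulAut.conj h).toMonoidHom
      = M.map (MulAut.conj (h * g)).toMonoidHom := by
  rw [Subgroup.map_map]
  congr 1
  ext x
  simp [MulAut.conj_apply, mul_assoc]

lemma normal_of_index_two {H : Subgroup G} (hH : H.index = 2) : H.Normal := by
  constructor
  intro n hn x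
  rw [Subgroup.mul_mem_iff_of_index_two hH, Subgroup.mul_mem_iff_of_index_two hH,
    inv_mem_iff]
  simp [hn]

lemma conjMap_normalIn {H M : Subgroup G} (hH : H.index = 2) (hM : NormalIn M H) (g : G) :
    NormalIn (M.map (MulAut.conj g).toMonoidHom) H := by
  have hHnrm := normal_of_index_two hH
  constructor
  · rintro x ⟨m, hm, rfl⟩
    simpa [MulAut.conj_apply] using hHnrm.conj_mem m (hM.1 hm) g
  · intro h hh n hn
    rw [mem_conjMap_iff] at hn ⊢
    have h1 : g⁻¹ * h * g ∈ H := by simpa using hHnrm.conj_mem h hh g⁻¹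
    have := hM.2 _ h1 _ hn
    convert this using 1
    group

lemma conjMap_one (M : Subgroup G) :
    M.map (MulAut.conj (1 : G)).toMonoidHom = M := by
  ext x
  rw [mem_conjMap_iff]
  simp

lemma conjMap_le_of_normalIn {H M : Subgroup G} (hM : NormalIn M H) {h : G} (hh : h ∈ H) :
    M.map (MulAut.conj h).toMonoidHom ≤ M := by
  rintro x ⟨m, hm, rfl⟩
  exact hM.2 h hh m hm

end aux

/-- a minimal normal subgroup of an index-2 subgroup is either minimal normal
in the whole group, or together with a conjugate generates a normal subgroup which is their
internal direct product. -/
theorem stmt12 (G : Type*) [Group G] (H : Subgroup G) (hH : H.index = 2)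
    (M : Subgroup G) (hM : IsMinimalNormalIn M H) :
    (M.Normal ∧ M ≤ H ∧ IsMinimalNormal M) ∨
    (∃ g : G, g ∉ H ∧
      M.map (MulAut.conj g⁻¹).toMonoidHom ≠ M ∧
      M ⊓ M.map (MulAut.conj g⁻¹).toMonoidHom = ⊥ ∧
      (∀ a ∈ M, ∀ b ∈ M.map (MulAut.conj g⁻¹).toMonoidHom, a * b = b * a) ∧
      (M ⊔ M.map (MulAut.conj g⁻¹).toMonoidHom).Normal ∧
      M ⊔ M.map (MulAut.conj g⁻¹).toMonoidHom ≤ H) := by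
  have hHn := normal_of_index_two hH
  obtain ⟨g, hg⟩ := Subgroup.index_eq_two_iff.mp hH
  have hgH : g ∉ H := by
    have h1 := hg 1
    rw [one_mul] at h1
    rcases h1 with ⟨_, h2⟩ | ⟨_, h2⟩
    · exact absurd (one_mem H) h2
    · exact h2
  have hgg : g * g ∈ H := Subgroup.mul_self_mem_of_index_two hH g
  have hMH : M ≤ H := hM.1.1
  set Mg := M.map (MulAut.conj g⁻¹).toMonoidHom with hMgdef
  have hMgN : NormalIn Mg H := conjMap_normalIn hH hM.1 g⁻¹
  have hMinter : M ⊓ Mg = ⊥ ∨ Mg = M := by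
    by_cases hc : Mg = M
    · exact Or.inr hc
    have hint : NormalIn (M ⊓ Mg) H :=
      ⟨inf_le_left.trans hMH, fun h hh n hn =>
        ⟨hM.1.2 h hh n hn.1, hMgN.2 h hh n hn.2⟩⟩
    rcases hM.2.2 _ hint inf_le_left with h | h
    · exact Or.inl h
    · exfalso
      have hMle : M ≤ Mg := by rw [← h]; exact inf_le_right
      set M' := M.map (MulAut.conj g).toMonoidHom with hM'def
      have hM'le : M' ≤ M := by
        calc M' ≤ Mg.map (MulAut.conj g).toMonoidHom := Subgroup.map_mono hMle
        _ = M.map (MulAut.conj (g * g⁻¹)).toMonoidHom := conjMap_conjMap M g⁻¹ g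
        _ = M := by rw [mul_inv_cancel, conjMap_one]
      have hM'N : NormalIn M' H := conjMap_normalIn hH hM.1 g
      have hM'ne : M' ≠ ⊥ := by
        intro hb
        apply hM.2.1
        have hid : M = M'.map (MulAut.conj g⁻¹).toMonoidHom := by
          rw [hM'def, conjMap_conjMap, inv_mul_cancel, conjMap_one]
        rw [hid, hb, Subgroup.map_bot]
      rcases hM.2.2 _ hM'N hM'le with h' | h'
      · exact hM'ne h'
      · apply hc
        rw [hMgdef]
        conv_lhs => rw [← h']
        rw [hM'def, conjMap_conjMap, inv_mul_cancel, conjMap_one]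
  by_cases hc : Mg = M
  · -- M is normal in G
    left
    have hnorm : M.Normal := by
      constructor
      intro n hn x
      by_cases hx : x ∈ H
      · exact hM.1.2 x hx n hn
      · have hxg : x * g ∈ H := ((hg x).resolve_right (fun hh => hx hh.1)).1
        have hn' : g⁻¹ * n * g ∈ M := by
          rw [← hc]
          exact (mem_conjMap_iff M g⁻¹ (g⁻¹ * n * g)).mpr (by
            simpa [mul_assoc] using hn)
        have h2 := hM.1.2 _ hxg _ hn'
        convert h2 using 1
        group
    refine ⟨hnorm, hMH, hnorm, hM.2.1, fun N hN hNle => ?_⟩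
    exact hM.2.2 N ⟨hNle.trans hMH, fun h _ n hn => hN.conj_mem n hn h⟩ hNle
  · right
    have hbot : M ⊓ Mg = ⊥ := hMinter.resolve_right hc
    refine ⟨g, hgH, hc, hbot, ?_, ?_, sup_le hMH hMgN.1⟩
    · -- commuting
      intro a ha b hb
      have hbH : b ∈ H := hMgN.1 hb
      have haH : a ∈ H := hMH ha
      have hcomm : a * b * a⁻¹ * b⁻¹ = 1 := by
        have h1 : a * b * a⁻¹ * b⁻¹ ∈ M ⊓ Mg := by
          constructor
          · have h3 : b * a⁻¹ * b⁻¹ ∈ M := hM.1.2 b hbH a⁻¹ (inv_mem ha)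
            have h4 := M.mul_mem ha h3
            have e : a * (b * a⁻¹ * b⁻¹) = a * b * a⁻¹ * b⁻¹ := by group
            rw [e] at h4
            exact h4
          · have h3 : a * b * a⁻¹ ∈ Mg := hMgN.2 a haH b hb
            exact Mg.mul_mem h3 (inv_mem hb)
        rw [hbot] at h1
        exact h1
      have heq : a * b = (a * b * a⁻¹ * b⁻¹) * (b * a) := by group
      rw [heq, hcomm, one_mul]
    · -- normality of the join
      constructor
      intro n hn x
      have key : ∀ y : G, (M ⊔ Mg).map (MulAut.conj y).toMonoidHom ≤ M ⊔ Mg := by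
        intro y
        rw [Subgroup.map_sup]
        by_cases hy : y ∈ H
        · exact sup_le ((conjMap_le_of_normalIn hM.1 hy).trans le_sup_left)
            ((conjMap_le_of_normalIn hMgN hy).trans le_sup_right)
        · have hyg : y * g ∈ H := ((hg y).resolve_right (fun hh => hy hh.1)).1
          have e1 : M.map (MulAut.conj y).toMonoidHom
              = Mg.map (MulAut.conj (y * g)).toMonoidHom := by
            rw [hMgdef, conjMap_conjMap]
            congr 1
            group
          have e2 : Mg.map (MulAut.conj y).toMonoidHom
              = (M.map (MulAut.conj (g⁻¹ * g⁻¹)).toMonoidHom).map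
                  (MulAut.conj (y * g)).toMonoidHom := by
            rw [hMgdef, conjMap_conjMap, conjMap_conjMap]
            congr 1
            group
          have hginv : g⁻¹ * g⁻¹ ∈ H := by
            have h5 := H.inv_mem hgg
            simpa [mul_inv_rev] using h5
          refine sup_le ?_ ?_
          · rw [e1]
            exact (conjMap_le_of_normalIn hMgN hyg).trans le_sup_right
          · rw [e2]
            exact ((Subgroup.map_mono (conjMap_le_of_normalIn hM.1 hginv)).trans
              (conjMap_le_of_normalIn hM.1 hyg)).trans le_sup_left
      exact key x ⟨n, hn, rfl⟩


end OG4
end
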